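/- Let (X, μ) be a standard Borel probability space, let S be an invertible measure-preserving Borel transformation of X, and let (T_n) be a sequence of measure-preserving Borel transformations of X such that μ(T_n⁻¹(A) △ A) → 0 for every measurable A ⊆ X. Then μ({x ∈ X : T_n(x) = S(x) and S(x) ≠ x}) → 0. (This generalizes the lemma that a sequence in the full group of an equivalence relation which asymptotically fixes every set cannot agree with a fixed element away from the diagonal on a set of positive measure.) -/

import Mathlib

open Filter Topology MeasureTheory
open scoped symmDiff

/-- Let `(X, μ)` be a standard Borel probability space, `S` an invertible measure-preserving
Borel transformation of `X`, and `(T n)` a sequence of measure-preserving Borel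
transformations of `X` such that `μ (T n ⁻¹' A ∆ A) → 0` for every measurable `A ⊆ X`.
Then `μ {x : T n x = S x ∧ S x ≠ x} → 0`. -/
theorem tendsto_measure_agree_off_diagonal
    {X : Type*} [MeasurableSpace X] [StandardBorelSpace X]
    (μ : Measure X) [IsProbabilityMeasure μ]
    (S : X ≃ᵐ X) (hS : MeasurePreserving S μ μ)
    (T : ℕ → X → X) (hT : ∀ n, MeasurePreserving (T n) μ μ)
    (hinv : ∀ A : Set X, MeasurableSet A →
      Tendsto (fun n => (μ ((T n ⁻¹' A) ∆ A)).toReal) atTop (𝓝 0)) :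
    Tendsto (fun n => (μ {x : X | T n x = S x ∧ S x ≠ x}).toReal) atTop (𝓝 0) := by
  obtain ⟨f, hf⟩ := exists_measurableEmbedding_real X
  set e : ℕ → ℚ := fun k => (Denumerable.eqv ℚ).symm k with he
  set A : ℕ → Set X := fun k => f ⁻¹' Set.Iio ((e k : ℝ)) with hA
  have hAm : ∀ k, MeasurableSet (A k) := fun k => hf.measurable measurableSet_Iio
  set E : ℕ → Set X := fun k => (A k) ∆ (S ⁻¹' A k) with hE
  have hEm : ∀ k, MeasurableSet (E k) :=
    fun k => MeasurableSet.symmDiff (hAm k) (S.measurable (hAm k))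
  have hM : {x : X | S x ≠ x} = ⋃ k, E k := by
    ext x
    simp only [Set.mem_setOf_eq, Set.mem_iUnion]
    constructor
    · intro hx
      have hfx : f (S x) ≠ f x := fun h => hx (hf.injective h)
      rcases lt_or_gt_of_ne hfx with h | h
      · obtain ⟨q, hq1, hq2⟩ := exists_rat_btwn h
        refine ⟨(Denumerable.eqv ℚ) q, Set.mem_symmDiff.mpr (Or.inr ⟨?_, ?_⟩)⟩
        · simp only [hE, hA, he, Set.mem_preimage, Set.mem_Iio, Equiv.symm_apply_apply]
          exact hq1
        · simp only [hE, hA, he, Set.mem_preimage, Set.mem_Iio, Equiv.symm_apply_apply]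
          exact not_lt.mpr hq2.le
      · obtain ⟨q, hq1, hq2⟩ := exists_rat_btwn h
        refine ⟨(Denumerable.eqv ℚ) q, Set.mem_symmDiff.mpr (Or.inl ⟨?_, ?_⟩)⟩
        · simp only [hE, hA, he, Set.mem_preimage, Set.mem_Iio, Equiv.symm_apply_apply]
          exact hq1
        · simp only [hE, hA, he, Set.mem_preimage, Set.mem_Iio, Equiv.symm_apply_apply]
          exact not_lt.mpr hq2.le
    · rintro ⟨k, hk⟩ hSx
      rcases Set.mem_symmDiff.mp hk with ⟨h1, h2⟩ | ⟨h1, h2⟩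
      · exact h2 (by rw [Set.mem_preimage, hSx]; exact h1)
      · exact h2 (by rw [Set.mem_preimage, hSx] at h1; exact h1)
  have hMm : MeasurableSet {x : X | S x ≠ x} := hM ▸ MeasurableSet.iUnion hEm
  have hAccm : ∀ K, MeasurableSet (Set.accumulate E K) := by
    intro K
    apply MeasurableSet.biUnion (Set.to_countable _) fun k _ => hEm k
  have hR : Tendsto (fun K => μ ({x : X | S x ≠ x} \ Set.accumulate E K)) atTop (𝓝 0) := by
    have h1 := tendsto_measure_iInter_atTop (μ := μ)
        (s := fun K => {x : X | S x ≠ x} \ Set.accumulate E K)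
        (fun K => ((hMm.diff (hAccm K)).nullMeasurableSet))
        (fun i j hij => Set.diff_subset_diff_right (Set.monotone_accumulate hij))
        ⟨0, measure_ne_top μ _⟩
    have h2 : (⋂ K, {x : X | S x ≠ x} \ Set.accumulate E K) = ∅ := by
      rw [← Set.diff_iUnion, Set.iUnion_accumulate, ← hM, Set.diff_self]
    rw [h2] at h1
    simpa [Function.comp_def] using h1
  have hinv' : ∀ k, Tendsto (fun n => μ ((T n ⁻¹' A k) ∆ A k)) atTop (𝓝 0) := by
    intro k
    rw [← ENNReal.tendsto_toReal_iff (fun n => measure_ne_top μ _) ENNReal.zero_ne_top]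
    simpa using hinv (A k) (hAm k)
  have main : Tendsto (fun n => μ {x : X | T n x = S x ∧ S x ≠ x}) atTop (𝓝 0) := by
    rw [ENNReal.tendsto_nhds_zero]
    intro ε hε
    obtain ⟨K, hK⟩ := (ENNReal.tendsto_nhds_zero.mp hR (ε / 2)
      (ENNReal.half_pos hε.ne')).exists
    have hsum : Tendsto (fun n => ∑ k ∈ Finset.range (K + 1), μ ((T n ⁻¹' A k) ∆ A k))
        atTop (𝓝 0) := by
      have := tendsto_finset_sum (Finset.range (K + 1)) (fun k _ => hinv' k)
      simpa using this
    have hsub : ∀ n, {x : X | T n x = S x ∧ S x ≠ x} ⊆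
        ({x : X | S x ≠ x} \ Set.accumulate E K) ∪
          ⋃ k ∈ Finset.range (K + 1), (T n ⁻¹' A k) ∆ (A k) := by
      rintro n x ⟨hTx, hSx⟩
      by_cases hx : x ∈ Set.accumulate E K
      · right
        obtain ⟨k, hkK, hk⟩ := Set.mem_accumulate.mp hx
        refine Set.mem_biUnion (Finset.mem_range.mpr (Nat.lt_succ_of_le hkK)) ?_
        rcases Set.mem_symmDiff.mp hk with ⟨h1, h2⟩ | ⟨h1, h2⟩
        · refine Set.mem_symmDiff.mpr (Or.inr ⟨h1, fun h => h2 ?_⟩)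
          rw [Set.mem_preimage] at h ⊢
          rwa [← hTx]
        · refine Set.mem_symmDiff.mpr (Or.inl ⟨?_, h2⟩)
          rw [Set.mem_preimage] at h1 ⊢
          rwa [hTx]
      · exact Or.inl ⟨hSx, hx⟩
    filter_upwards [(ENNReal.tendsto_nhds_zero.mp hsum (ε / 2)
      (ENNReal.half_pos hε.ne'))] with n hn
    calc μ {x : X | T n x = S x ∧ S x ≠ x}
        ≤ μ (({x : X | S x ≠ x} \ Set.accumulate E K) ∪
            ⋃ k ∈ Finset.range (K + 1), (T n ⁻¹' A k) ∆ (A k)) := measure_mono (hsub n)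
      _ ≤ μ ({x : X | S x ≠ x} \ Set.accumulate E K) +
            μ (⋃ k ∈ Finset.range (K + 1), (T n ⁻¹' A k) ∆ (A k)) := measure_union_le _ _
      _ ≤ ε / 2 + ∑ k ∈ Finset.range (K + 1), μ ((T n ⁻¹' A k) ∆ (A k)) :=
          add_le_add hK (measure_biUnion_finset_le _ _)
      _ ≤ ε / 2 + ε / 2 := add_le_add le_rfl hn
      _ = ε := ENNReal.add_halves ε
  have := (ENNReal.tendsto_toReal ENNReal.zero_ne_top).comp main
  simpa [Function.comp_def] using this
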